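/- Let Γ be a finite set of subsets of a set A containing a non-trivial member γ with ∅ ≠ γ ⊊ A. Then both the set {Pol(Q) : Q ⊆ DD(Γ) finite} and the set {Pol(Q) : Q ⊆ DD(Γ)} have cardinality exactly ℵ₀. -/

import Mathlib

/-- The `n`-ary cross relation defined by the tuple `γ` of unary relations:
`{(x₁,…,xₙ) : x₁ ∈ γ₁ ∨ … ∨ xₙ ∈ γₙ}`. -/
def Cross {A : Type*} {n : ℕ} (γ : Fin n → Set A) : Set (Fin n → A) :=
  {x | ∃ i, x i ∈ γ i}

/-- A finitary relation on `A`: an arity together with a set of tuples of that arity. -/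
abbrev FinRel (A : Type*) := Σ n : ℕ, Set (Fin n → A)

/-- A `k`-ary operation `f` preserves an `n`-ary relation `ρ` if applying `f`
componentwise to any `k` tuples of `ρ` yields a tuple of `ρ`. -/
def Preserves {A : Type*} {k n : ℕ} (f : (Fin k → A) → A) (ρ : Set (Fin n → A)) : Prop :=
  ∀ r : Fin k → Fin n → A, (∀ j, r j ∈ ρ) → (fun i => f fun j => r j i) ∈ ρ

/-- A finitary operation on `A` of positive arity `k + 1`. -/
abbrev Op (A : Type*) := Σ k : ℕ, (Fin (k + 1) → A) → A

/-- The polymorphism clone of a set of finitary relations: all finitary operations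
of positive arity preserving every relation of the set. -/
def Pol {A : Type*} (Q : Set (FinRel A)) : Set (Op A) :=
  {f | ∀ ρ ∈ Q, Preserves f.2 ρ.2}

/-- Relations disjunctively definable from the unary language `Γ`:
crosses `R(γ₁,…,γₙ)` with `n ≥ 1` and all `γᵢ ∈ Γ`. -/
def DD {A : Type*} (Γ : Set (Set A)) : Set (FinRel A) :=
  {ρ | 1 ≤ ρ.1 ∧ ∃ γ : Fin ρ.1 → Set A, (∀ i, γ i ∈ Γ) ∧ ρ.2 = Cross γ}

section Aux

variable {A : Type*}

/-- `f` has a column escaping `g`. -/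
def BadFor {k : ℕ} (f : (Fin (k+1) → A) → A) (g : Set A) : Prop := ∃ c, f c ∉ g

variable (Γ : Set (Set A))

/-- `f` fails some cross whose tuple of relations has multiplicity vector `m`. -/
def FailM {k : ℕ} (f : (Fin (k+1) → A) → A) (m : ↥Γ → ℕ) : Prop :=
  ∃ (n : ℕ) (γv : Fin n → ↥Γ) (r : Fin (k+1) → Fin n → A),
    (∀ g : ↥Γ, {i | γv i = g}.ncard = m g) ∧
    (∀ j, ∃ i, r j i ∈ (γv i : Set A)) ∧
    (∀ i, f (fun j => r j i) ∉ (γv i : Set A))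

/-- `ρ` is a cross with multiplicity vector `m`. -/
def RepM (m : ↥Γ → ℕ) (ρ : FinRel A) : Prop :=
  ∃ γv : Fin ρ.1 → ↥Γ, ρ.2 = Cross (fun i => (γv i : Set A)) ∧
    ∀ g : ↥Γ, {i | γv i = g}.ncard = m g

lemma rep_exists {ρ : FinRel A} (hρ : ρ ∈ DD Γ) : ∃ m, RepM Γ m ρ := by
  obtain ⟨-, γvec, hγ, heq⟩ := hρ
  exact ⟨fun g => {i | (⟨γvec i, hγ i⟩ : ↥Γ) = g}.ncard,
    ⟨fun i => ⟨γvec i, hγ i⟩, heq, fun g => rfl⟩⟩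

lemma bridgeA {k : ℕ} {f : (Fin (k+1) → A) → A} {m : ↥Γ → ℕ} {ρ : FinRel A}
    (hrep : RepM Γ m ρ) (hnp : ¬ Preserves f ρ.2) : FailM Γ f m := by
  obtain ⟨γv, heq, hcnt⟩ := hrep
  rw [heq] at hnp
  unfold Preserves at hnp
  push_neg at hnp
  obtain ⟨r, hrows, hout⟩ := hnp
  refine ⟨ρ.1, γv, r, hcnt, fun j => hrows j, fun i hi => hout ⟨i, hi⟩⟩

lemma exists_comp_equiv {B : Type*} [Finite B] {n n' : ℕ} (v : Fin n → B) (v' : Fin n' → B)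
    (h : ∀ b, {i | v i = b}.ncard = {i | v' i = b}.ncard) :
    ∃ π : Fin n ≃ Fin n', ∀ i, v' (π i) = v i := by
  have hfib : ∀ b, Nonempty ({i // v i = b} ≃ {i // v' i = b}) := by
    intro b
    rw [← Finite.card_eq]
    have h1 : Nat.card {i // v i = b} = {i | v i = b}.ncard := Nat.card_coe_set_eq _
    have h2 : Nat.card {i // v' i = b} = {i | v' i = b}.ncard := Nat.card_coe_set_eq _
    rw [h1, h2, h]
  refine ⟨((Equiv.sigmaFiberEquiv v).symm.trans
    (Equiv.sigmaCongrRight fun b => (hfib b).some)).trans (Equiv.sigmaFiberEquiv v'), ?_⟩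
  intro i
  exact ((hfib (v i)).some ⟨i, rfl⟩).2

lemma bridgeC {k : ℕ} {f : (Fin (k+1) → A) → A} {m : ↥Γ → ℕ} {ρ : FinRel A}
    (hΓ : Γ.Finite) (hfail : FailM Γ f m) (hrep : RepM Γ m ρ) : ¬ Preserves f ρ.2 := by
  haveI := hΓ.to_subtype
  obtain ⟨n, γv, r, hcnt, hrow, hcol⟩ := hfail
  obtain ⟨γv', heq, hcnt'⟩ := hrep
  obtain ⟨π, hπ⟩ := exists_comp_equiv γv γv' (fun g => by rw [hcnt g, hcnt' g])
  rw [heq]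
  intro hpres
  have hrows : ∀ j, (fun i' => r j (π.symm i')) ∈ Cross (fun i => ((γv' i : Set A))) := by
    intro j
    obtain ⟨i, hi⟩ := hrow j
    refine ⟨π i, ?_⟩
    show r j (π.symm (π i)) ∈ (γv' (π i) : Set A)
    rw [Equiv.symm_apply_apply, hπ i]
    exact hi
  obtain ⟨i', hi'⟩ := hpres (fun j i' => r j (π.symm i')) hrows
  have hgv : γv' i' = γv (π.symm i') := by rw [← hπ (π.symm i'), Equiv.apply_symm_apply]
  have hi'' : f (fun j => r j (π.symm i')) ∈ (γv' i' : Set A) := hi'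
  rw [hgv] at hi''
  exact hcol (π.symm i') hi''

lemma failM_supp {k : ℕ} {f : (Fin (k+1) → A) → A} {m : ↥Γ → ℕ}
    (hfail : FailM Γ f m) : ∀ g : ↥Γ, 0 < m g → BadFor f (g : Set A) := by
  obtain ⟨n, γv, r, hcnt, hrow, hcol⟩ := hfail
  intro g hg
  have : {i | γv i = g}.Nonempty := by
    apply Set.nonempty_of_ncard_ne_zero
    rw [hcnt g]; omega
  obtain ⟨i, hi⟩ := this
  exact ⟨fun j => r j i, by rw [← hi]; exact hcol i⟩

lemma failM_mono [Nonempty A] {k : ℕ} {f : (Fin (k+1) → A) → A} {m m' : ↥Γ → ℕ}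
    (hΓ : Γ.Finite) (hfail : FailM Γ f m) (hle : m ≤ m')
    (hS : ∀ g : ↥Γ, 0 < m' g → BadFor f (g : Set A)) : FailM Γ f m' := by
  haveI := hΓ.to_subtype
  obtain ⟨n, γv, r, hcnt, hrow, hcol⟩ := hfail
  have hw : ∀ g : ↥Γ, ∃ c : Fin (k+1) → A, 0 < m' g → f c ∉ (g : Set A) := by
    intro g
    by_cases h : 0 < m' g
    · obtain ⟨c, hc⟩ := hS g h; exact ⟨c, fun _ => hc⟩
    · exact ⟨Classical.arbitrary _, fun h' => absurd h' h⟩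
  choose w hw using hw
  let T := Fin n ⊕ (Σ g : ↥Γ, Fin (m' g - m g))
  haveI : Fintype T := Fintype.ofFinite T
  let e : Fin (Fintype.card T) ≃ T := (Fintype.equivFin T).symm
  let u : T → ↥Γ := Sum.elim γv Sigma.fst
  let c : T → (Fin (k+1) → A) := Sum.elim (fun i j => r j i) (fun s => w s.1)
  refine ⟨Fintype.card T, fun x => u (e x), fun j x => c (e x) j, ?_, ?_, ?_⟩
  · intro g
    have eq1 : {x : Fin (Fintype.card T) // u (e x) = g} ≃ {t : T // u t = g} :=
      Equiv.subtypeEquiv e (fun x => Iff.rfl)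
    have eq2 : {t : T // u t = g} ≃
        ({i : Fin n // γv i = g} ⊕ {s : Σ g' : ↥Γ, Fin (m' g' - m g') // s.1 = g}) :=
      { toFun := fun t => match t with
          | ⟨.inl i, hti⟩ => .inl ⟨i, hti⟩
          | ⟨.inr s, hts⟩ => .inr ⟨s, hts⟩
        invFun := fun t => match t with
          | .inl ⟨i, hti⟩ => ⟨.inl i, hti⟩
          | .inr ⟨s, hts⟩ => ⟨.inr s, hts⟩
        left_inv := fun t => by rcases t with ⟨i|s, ht⟩ <;> rfl
        right_inv := fun t => by rcases t with ⟨i,ht⟩|⟨s,ht⟩ <;> rfl }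
    have eq3 : {s : Σ g' : ↥Γ, Fin (m' g' - m g') // s.1 = g} ≃ Fin (m' g - m g) :=
      { toFun := fun s => Fin.cast (by rw [s.2]) s.1.2
        invFun := fun t => ⟨⟨g, t⟩, rfl⟩
        left_inv := fun s => by
          rcases s with ⟨⟨g', t⟩, hs⟩
          dsimp at hs
          subst hs
          rfl
        right_inv := fun t => rfl }
    have hfin1 : Nat.card {i : Fin n // γv i = g} = m g := by
      rw [← hcnt g, ← Nat.card_coe_set_eq]
      rfl
    have := Nat.card_coe_set_eq {x : Fin (Fintype.card T) | u (e x) = g}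
    rw [← this]
    calc Nat.card {x : Fin (Fintype.card T) // u (e x) = g}
        = Nat.card ({i : Fin n // γv i = g} ⊕
            {s : Σ g' : ↥Γ, Fin (m' g' - m g') // s.1 = g}) :=
          Nat.card_congr (eq1.trans eq2)
      _ = m g + (m' g - m g) := by
          rw [Nat.card_sum, hfin1, Nat.card_congr eq3, Nat.card_eq_fintype_card,
            Fintype.card_fin]
      _ = m' g := Nat.add_sub_cancel' (hle g)
  · intro j
    obtain ⟨i, hi⟩ := hrow j
    refine ⟨e.symm (.inl i), ?_⟩
    show c (e (e.symm (Sum.inl i))) j ∈ (u (e (e.symm (Sum.inl i))) : Set A)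
    rw [Equiv.apply_symm_apply]
    exact hi
  · intro x
    show f (c (e x)) ∉ (u (e x) : Set A)
    rcases hx : e x with i | s
    · exact hcol i
    · have hpos : 0 < m' s.1 := by have := s.2.pos; omega
      exact hw s.1 hpos

/-- Multiplicity vectors occurring in `Q`. -/
def MQ (Q : Set (FinRel A)) : Set (↥Γ → ℕ) := {m | ∃ ρ ∈ Q, RepM Γ m ρ}

/-- Lower closure of the multiplicity vectors of `Q` supported in `S`. -/
def DSet (Q : Set (FinRel A)) (S : Set ↥Γ) : Set (↥Γ → ℕ) :=
  {m | ∃ m' ∈ MQ Γ Q, m ≤ m' ∧ ∀ g, 0 < m' g → g ∈ S}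

lemma dset_lower (Q : Set (FinRel A)) (S : Set ↥Γ) : IsLowerSet (DSet Γ Q S) := by
  rintro m₁ m₀ hle ⟨m', hm', hle', hsupp⟩
  exact ⟨m', hm', le_trans hle hle', hsupp⟩

lemma pol_mono_of_dset [Nonempty A] (hΓ : Γ.Finite) {Q Q' : Set (FinRel A)}
    (hQ : Q ⊆ DD Γ) (h : ∀ S, DSet Γ Q S ⊆ DSet Γ Q' S) : Pol Q' ⊆ Pol Q := by
  intro f hf ρ hρ
  by_contra hpres
  obtain ⟨m, hrep⟩ := rep_exists Γ (hQ hρ)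
  have hfail : FailM Γ f.2 m := bridgeA Γ hrep hpres
  have hmS : Membership.mem (DSet Γ Q {g : ↥Γ | BadFor f.2 (g : Set A)}) m :=
    ⟨m, ⟨ρ, hρ, hrep⟩, le_refl _, fun g hg => failM_supp Γ hfail g hg⟩
  obtain ⟨m'', ⟨ρ', hρ', hrep'⟩, hle, hsupp⟩ := h _ hmS
  exact bridgeC Γ hΓ (failM_mono Γ hΓ hfail hle hsupp) hrep' (hf ρ' hρ')

lemma pol_eq_of_dset [Nonempty A] (hΓ : Γ.Finite) {Q Q' : Set (FinRel A)}
    (hQ : Q ⊆ DD Γ) (hQ' : Q' ⊆ DD Γ) (h : ∀ S, DSet Γ Q S = DSet Γ Q' S) :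
    Pol Q = Pol Q' :=
  le_antisymm (pol_mono_of_dset Γ hΓ hQ' (fun S => (h S).ge))
    (pol_mono_of_dset Γ hΓ hQ (fun S => (h S).le))

/-- Dickson: lower subsets of `B → ℕ` (B finite) form a countable family. -/
lemma countable_isLowerSet (B : Type*) [Finite B] :
    {D : Set (B → ℕ) | IsLowerSet D}.Countable := by
  haveI : ∀ _ : B, IsWellOrder ℕ (· < ·) := fun _ => inferInstance
  have hpwo : (Set.univ : Set (B → ℕ)).IsPWO := Set.isPWO_of_wellQuasiOrderedLE Set.univ
  set μ : Set (B → ℕ) → Set (B → ℕ) :=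
    fun U => {u | u ∈ U ∧ ∀ v ∈ U, v ≤ u → v = u} with hμ
  have key : ∀ U : Set (B → ℕ), ∀ u ∈ U, ∃ v ∈ μ U, v ≤ u := by
    intro U u hu
    have hwf : {v | v ∈ U ∧ v ≤ u}.IsWF := (hpwo.isWF).mono (Set.subset_univ _)
    have hne : {v | v ∈ U ∧ v ≤ u}.Nonempty := ⟨u, hu, le_refl u⟩
    refine ⟨hwf.min hne, ⟨(hwf.min_mem hne).1, ?_⟩, (hwf.min_mem hne).2⟩
    intro v hv hvle
    by_contra hvne
    exact hwf.not_lt_min hne ⟨hv, le_trans hvle (hwf.min_mem hne).2⟩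
      (lt_of_le_of_ne hvle hvne)
  have hfin : ∀ U, (μ U).Finite := by
    intro U
    have hanti : IsAntichain (· ≤ ·) (μ U) := by
      rintro x ⟨hx, hxmin⟩ y ⟨hy, hymin⟩ hne hle
      exact hne (hymin x hx hle)
    exact hanti.finite_of_partiallyWellOrderedOn (hpwo.mono (Set.subset_univ _))
  have hrec : ∀ D : Set (B → ℕ), IsLowerSet D →
      D = {u | ∃ v ∈ μ Dᶜ, v ≤ u}ᶜ := by
    intro D hD
    ext u
    simp only [Set.mem_compl_iff, Set.mem_setOf_eq]
    constructor
    · intro hu ⟨v, ⟨hv, _⟩, hle⟩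
      exact hv (hD hle hu)
    · intro hu
      by_contra hc
      obtain ⟨v, hv, hle⟩ := key Dᶜ u hc
      exact hu ⟨v, hv, hle⟩
  have hsub : {D : Set (B → ℕ) | IsLowerSet D} ⊆
      (fun s : Set (B → ℕ) => {u | ∃ v ∈ s, v ≤ u}ᶜ) '' {s | s.Finite ∧ s ⊆ Set.univ} := by
    intro D hD
    exact ⟨μ Dᶜ, ⟨hfin _, Set.subset_univ _⟩, (hrec D hD).symm⟩
  exact Set.Countable.mono hsub
    ((Set.countable_setOf_finite_subset Set.countable_univ).image _)

end Aux

/-- For a finite unary relational language `Γ` containing a non-trivial member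
`∅ ≠ γ ⊊ A`, both the set of polymorphism clones of finite subsets of `DD Γ` and
the set of polymorphism clones of arbitrary subsets of `DD Γ` have cardinality
exactly `ℵ₀`. -/
theorem mk_pol_eq_aleph0_of_finite_language {A : Type*} (Γ : Set (Set A))
    (hΓ : Γ.Finite) (γ : Set A) (hγΓ : γ ∈ Γ) (hne : γ.Nonempty)
    (hproper : γ ≠ Set.univ) :
    Cardinal.mk {F : Set (Op A) | ∃ Q, Q ⊆ DD Γ ∧ Q.Finite ∧ F = Pol Q} =
        Cardinal.aleph0 ∧
      Cardinal.mk {F : Set (Op A) | ∃ Q ⊆ DD Γ, F = Pol Q} = Cardinal.aleph0 := by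
  haveI : Nonempty A := ⟨hne.some⟩
  haveI := hΓ.to_subtype
  set S1 := {F : Set (Op A) | ∃ Q, Q ⊆ DD Γ ∧ Q.Finite ∧ F = Pol Q} with hS1
  set S2 := {F : Set (Op A) | ∃ Q ⊆ DD Γ, F = Pol Q} with hS2def
  have hsub : S1 ⊆ S2 := by
    rintro F ⟨Q, hQ, -, hF⟩
    exact ⟨Q, hQ, hF⟩
  -- countability of S2
  have hS2 : S2.Countable := by
    haveI : Countable {D : Set (↥Γ → ℕ) // IsLowerSet D} :=
      (countable_isLowerSet ↥Γ).to_subtype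
    rw [← Set.countable_coe_iff]
    have hex : ∀ F : ↥S2, ∃ Q, Q ⊆ DD Γ ∧ (F : Set (Op A)) = Pol Q := by
      rintro ⟨F, Q, hQ, hF⟩
      exact ⟨Q, hQ, hF⟩
    choose Qf hQf hPf using hex
    have hinj : Function.Injective
        (fun F : ↥S2 => (fun S => (⟨DSet Γ (Qf F) S, dset_lower Γ (Qf F) S⟩ :
          {D : Set (↥Γ → ℕ) // IsLowerSet D}))) := by
      intro F F' hFF
      have hd : ∀ S, DSet Γ (Qf F) S = DSet Γ (Qf F') S := by
        intro S
        exact congrArg Subtype.val (congrFun hFF S)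
      apply Subtype.ext
      rw [hPf F, hPf F']
      exact pol_eq_of_dset Γ hΓ (hQf F) (hQf F') hd
    exact hinj.countable
  -- the chain of crosses over γ
  obtain ⟨a, ha⟩ := hne
  obtain ⟨b, hb⟩ : ∃ b, b ∉ γ := by
    by_contra hcon
    push_neg at hcon
    exact hproper (Set.eq_univ_of_forall hcon)
  set σ : ℕ → FinRel A := fun n => ⟨n+1, Cross (fun _ : Fin (n+1) => γ)⟩ with hσ
  have hσDD : ∀ n, σ n ∈ DD Γ :=
    fun n => ⟨Nat.succ_le_succ (Nat.zero_le n), fun _ => γ, fun _ => hγΓ, rfl⟩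
  have chain : ∀ {n m : ℕ}, n ≤ m → Pol {σ m} ⊆ Pol {σ n} := by
    intro n m hnm F hF ρ hρ
    rw [Set.mem_singleton_iff] at hρ
    subst hρ
    have hm := hF (σ m) rfl
    intro r hr
    let emb : Fin (m+1) → Fin (n+1) := fun i =>
      if h : (i : ℕ) < n+1 then ⟨i, h⟩ else ⟨0, Nat.succ_pos n⟩
    have hout := hm (fun j i => r j (emb i)) ?_
    · obtain ⟨i, hi⟩ := hout
      exact ⟨emb i, hi⟩
    · intro j
      obtain ⟨i, hi⟩ := hr j
      have hlt : (i : ℕ) < m + 1 := lt_of_lt_of_le i.isLt (Nat.succ_le_succ hnm)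
      refine ⟨⟨(i : ℕ), hlt⟩, ?_⟩
      have hemb : emb ⟨(i : ℕ), hlt⟩ = i := by
        simp only [emb, dif_pos i.isLt]
      show r j (emb ⟨(i : ℕ), hlt⟩) ∈ γ
      rw [hemb]
      exact hi
  set tf : ℕ → Op A := fun n =>
    ⟨n+1, fun x => if 2 ≤ {j | x j ∈ γ}.ncard then a else b⟩ with htf
  have htf_mem : ∀ n, tf n ∈ Pol {σ n} := by
    intro n ρ hρ
    rw [Set.mem_singleton_iff] at hρ
    subst hρ
    intro r hr
    by_contra hcon
    have hsmall : ∀ i : Fin (n+1), {j | r j i ∈ γ}.ncard ≤ 1 := by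
      intro i
      by_contra hbig
      push_neg at hbig
      refine hcon ⟨i, ?_⟩
      show (if 2 ≤ {j | r j i ∈ γ}.ncard then a else b) ∈ γ
      rw [if_pos (show 2 ≤ {j | r j i ∈ γ}.ncard from hbig)]
      exact ha
    choose wfn hwfn using hr
    obtain ⟨j, j', hjne, hjeq⟩ := Fintype.exists_ne_map_eq_of_card_lt wfn (by simp; exact Nat.lt_succ_self n)
    have h2 : 2 ≤ {jj | r jj (wfn j) ∈ γ}.ncard := by
      have hsubp : ({j, j'} : Set (Fin (n+2))) ⊆ {jj | r jj (wfn j) ∈ γ} := by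
        rintro x (rfl | rfl)
        · exact hwfn x
        · rw [hjeq]
          exact hwfn x
      calc 2 = ({j, j'} : Set (Fin (n+2))).ncard := (Set.ncard_pair hjne).symm
        _ ≤ _ := Set.ncard_le_ncard hsubp (Set.toFinite _)
    exact absurd h2 (by simpa using Nat.lt_succ_of_le (hsmall (wfn j)))
  have htf_not : ∀ n, tf n ∉ Pol {σ (n+1)} := by
    intro n hmem
    have hp := hmem (σ (n+1)) rfl
    set r : Fin (n+2) → Fin (n+2) → A := fun j i => if j = i then a else b with hrdef
    have hrows : ∀ j, r j ∈ (σ (n+1)).2 := by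
      intro j
      exact ⟨j, by simp only [r, if_pos rfl]; exact ha⟩
    obtain ⟨i, hi⟩ := hp r hrows
    have hset : {j | r j i ∈ γ} = {i} := by
      ext j
      simp only [Set.mem_setOf_eq, Set.mem_singleton_iff, r]
      constructor
      · intro hj
        by_contra hji
        rw [if_neg hji] at hj
        exact hb hj
      · rintro rfl
        rw [if_pos rfl]
        exact ha
    have hcalc : (tf n).2 (fun j => r j i) = b := by
      show (if 2 ≤ {j | r j i ∈ γ}.ncard then a else b) = b
      rw [hset, Set.ncard_singleton, if_neg (by omega)]
    rw [show ((fun i => (tf n).2 fun j => r j i) i) = (tf n).2 (fun j => r j i) from rfl,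
      hcalc] at hi
    exact hb hi
  have key : ∀ n m : ℕ, n < m → Pol {σ n} ≠ Pol {σ m} := by
    intro n m hlt hEq
    exact htf_not n (chain (show n+1 ≤ m from hlt) (hEq ▸ htf_mem n))
  have hPolinj : Function.Injective (fun n => Pol {σ n}) := by
    intro n m h
    rcases lt_trichotomy n m with h' | h' | h'
    · exact absurd h (key _ _ h')
    · exact h'
    · exact absurd h.symm (key _ _ h')
  have hinf1 : Infinite ↥S1 := by
    refine Infinite.of_injective
      (fun n : ℕ => (⟨Pol {σ n}, {σ n}, Set.singleton_subset_iff.mpr (hσDD n),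
        Set.finite_singleton _, rfl⟩ : ↥S1)) ?_
    intro n m h
    exact hPolinj (congrArg Subtype.val h)
  have hinf2 : Infinite ↥S2 := by
    refine Infinite.of_injective
      (fun n : ℕ => (⟨Pol {σ n}, {σ n}, Set.singleton_subset_iff.mpr (hσDD n), rfl⟩ : ↥S2)) ?_
    intro n m h
    exact hPolinj (congrArg Subtype.val h)
  constructor
  · haveI : Countable ↥S1 := (hS2.mono hsub).to_subtype
    exact Cardinal.mk_eq_aleph0 _
  · haveI : Countable ↥S2 := hS2.to_subtype
    exact Cardinal.mk_eq_aleph0 _
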